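/- Let I be a subinterval of (0,∞), let f : I → (0,∞) be a geometrically convex function, and let a, b ∈ I with a < b and f(a) ≠ f(b). Then f(√(ab)) ≤ (1/(ln b − ln a)) ∫_a^b (1/t)·√(f(t)·f(ab/t)) dt ≤ (1/(ln b − ln a)) ∫_a^b f(t)/t dt ≤ (f(b) − f(a))/(ln f(b) − ln f(a)) ≤ (f(a) + f(b))/2. -/

import Mathlib

open MeasureTheory intervalIntegral Set

-- substitution t = exp u
lemma subst_exp (G : ℝ → ℝ) {a b : ℝ} (ha : 0 < a) (hab : a ≤ b) :
    ∫ t in a..b, G t / t = ∫ u in Real.log a..Real.log b, G (Real.exp u) := by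
  have hb : 0 < b := lt_of_lt_of_le ha hab
  have himg : Real.exp '' Set.Ioo (Real.log a) (Real.log b) = Set.Ioo a b := by
    ext t
    simp only [Set.mem_image, Set.mem_Ioo]
    constructor
    · rintro ⟨u, ⟨h1, h2⟩, rfl⟩
      constructor
      · calc a = Real.exp (Real.log a) := (Real.exp_log ha).symm
          _ < Real.exp u := Real.exp_lt_exp.2 h1
      · calc Real.exp u < Real.exp (Real.log b) := Real.exp_lt_exp.2 h2
          _ = b := Real.exp_log hb
    · rintro ⟨h1, h2⟩
      have ht : 0 < t := lt_trans ha h1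
      exact ⟨Real.log t, ⟨Real.log_lt_log ha h1, Real.log_lt_log ht h2⟩, Real.exp_log ht⟩
  have key := MeasureTheory.integral_image_eq_integral_abs_deriv_smul (s := Set.Ioo (Real.log a) (Real.log b)) measurableSet_Ioo
    (fun x _ => (Real.hasDerivAt_exp x).hasDerivWithinAt) Real.exp_injective.injOn
    (fun t => G t / t)
  rw [himg] at key
  have heq : (fun x => |Real.exp x| • (G (Real.exp x) / Real.exp x))
      = fun x => G (Real.exp x) := by
    funext x
    rw [abs_of_pos (Real.exp_pos x), smul_eq_mul, mul_div_cancel₀]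
    exact (Real.exp_ne_zero x)
  rw [heq] at key
  rw [intervalIntegral.integral_of_le hab,
    intervalIntegral.integral_of_le (Real.log_le_log ha hab),
    MeasureTheory.integral_Ioc_eq_integral_Ioo, MeasureTheory.integral_Ioc_eq_integral_Ioo, key]

-- integrability from continuity on the open interval + bound
lemma intInt_of_bdd {F : ℝ → ℝ} {α β M : ℝ} (hle : α ≤ β)
    (hc : ContinuousOn F (Set.Ioo α β)) (hM : ∀ u ∈ Set.Ioc α β, |F u| ≤ M) :
    IntervalIntegrable F volume α β := by
  rw [intervalIntegrable_iff_integrableOn_Ioc_of_le hle]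
  have hres : volume.restrict (Set.Ioo α β) = volume.restrict (Set.Ioc α β) :=
    Measure.restrict_congr_set Ioo_ae_eq_Ioc
  have hmeas : AEStronglyMeasurable F (volume.restrict (Set.Ioc α β)) := by
    rw [← hres]; exact hc.aestronglyMeasurable measurableSet_Ioo
  refine (integrable_const M).mono' hmeas ?_
  exact (ae_restrict_iff' measurableSet_Ioc).2 (ae_of_all _ fun u hu => by
    simpa using hM u hu)


/-- **Hermite–Hadamard type inequality for geometrically convex functions.**
If `f : I → (0,∞)` is geometrically convex on a subinterval `I` of `(0,∞)`,
`a, b ∈ I` with `a < b` and `f a ≠ f b`, then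
`f (√(ab)) ≤ (1/(ln b − ln a)) ∫_a^b (1/t)√(f t · f(ab/t)) dt
  ≤ (1/(ln b − ln a)) ∫_a^b f t / t dt
  ≤ (f b − f a)/(ln f b − ln f a) ≤ (f a + f b)/2`. -/
theorem stmt_0 (I : Set ℝ) (hI : I ⊆ Set.Ioi (0 : ℝ)) (hI' : I.OrdConnected)
    (f : ℝ → ℝ) (hfpos : ∀ x ∈ I, 0 < f x)
    (hgc : ∀ a ∈ I, ∀ b ∈ I, ∀ l ∈ Set.Icc (0 : ℝ) 1,
      f (a ^ l * b ^ (1 - l)) ≤ f a ^ l * f b ^ (1 - l))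
    (a b : ℝ) (ha : a ∈ I) (hb : b ∈ I) (hab : a < b) (hfab : f a ≠ f b) :
    f (Real.sqrt (a * b)) ≤
      (1 / (Real.log b - Real.log a)) *
        ∫ t in a..b, (1 / t) * Real.sqrt (f t * f (a * b / t)) ∧
    (1 / (Real.log b - Real.log a)) *
        (∫ t in a..b, (1 / t) * Real.sqrt (f t * f (a * b / t))) ≤
      (1 / (Real.log b - Real.log a)) * ∫ t in a..b, f t / t ∧
    (1 / (Real.log b - Real.log a)) * (∫ t in a..b, f t / t) ≤
      (f b - f a) / (Real.log (f b) - Real.log (f a)) ∧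
    (f b - f a) / (Real.log (f b) - Real.log (f a)) ≤ (f a + f b) / 2 := by
  have ha0 : (0:ℝ) < a := hI ha
  have hb0 : (0:ℝ) < b := hI hb
  set α := Real.log a with hα
  set β := Real.log b with hβ
  have hαβ : α < β := Real.log_lt_log ha0 hab
  have hIcc : Set.Icc a b ⊆ I := hI'.out ha hb
  set F : ℝ → ℝ := fun u => f (Real.exp u) with hF
  set g : ℝ → ℝ := fun u => Real.log (F u) with hg
  -- membership facts
  have hmem : ∀ u ∈ Set.Icc α β, Real.exp u ∈ I := by
    intro u hu
    apply hIcc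
    constructor
    · calc a = Real.exp α := (Real.exp_log ha0).symm
        _ ≤ Real.exp u := Real.exp_le_exp.2 hu.1
    · calc Real.exp u ≤ Real.exp β := Real.exp_le_exp.2 hu.2
        _ = b := Real.exp_log hb0
  have hFpos : ∀ u ∈ Set.Icc α β, 0 < F u := fun u hu => hfpos _ (hmem u hu)
  have hFg : ∀ u ∈ Set.Icc α β, F u = Real.exp (g u) :=
    fun u hu => (Real.exp_log (hFpos u hu)).symm
  -- geometric convexity in pure form
  have hgm : ∀ u ∈ Set.Icc α β, ∀ v ∈ Set.Icc α β, ∀ p ∈ Set.Icc (0:ℝ) 1,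
      F (p * u + (1 - p) * v) ≤ F u ^ p * F v ^ (1 - p) := by
    intro u hu v hv p hp
    have h := hgc (Real.exp u) (hmem u hu) (Real.exp v) (hmem v hv) p hp
    have he : Real.exp u ^ p * Real.exp v ^ (1 - p)
        = Real.exp (p * u + (1 - p) * v) := by
      rw [← Real.exp_mul, ← Real.exp_mul, ← Real.exp_add]
      ring_nf
    rw [he] at h
    exact h
  -- convexity of g
  have hconv : ConvexOn ℝ (Set.Icc α β) g := by
    refine ⟨convex_Icc _ _, ?_⟩
    intro x hx y hy p q hp hq hpq
    have hq' : q = 1 - p := by linarith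
    have h := hgm x hx y hy p ⟨hp, by linarith⟩
    rw [← hq'] at h
    have hx0 : 0 < F x := hFpos x hx
    have hy0 : 0 < F y := hFpos y hy
    have hmem2 : p • x + q • y ∈ Set.Icc α β :=
      (convex_Icc α β) hx hy hp hq hpq
    have hpos2 : 0 < F (p • x + q • y) := hFpos _ hmem2
    have : Real.log (F (p * x + q * y)) ≤ Real.log (F x ^ p * F y ^ q) := by
      apply Real.log_le_log hpos2
      simpa [smul_eq_mul] using h
    simp only [smul_eq_mul, hg]
    calc Real.log (F (p * x + q * y)) ≤ Real.log (F x ^ p * F y ^ q) := this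
      _ = p * Real.log (F x) + q * Real.log (F y) := by
          rw [Real.log_mul (by positivity) (by positivity),
            Real.log_rpow hx0, Real.log_rpow hy0]
  -- continuity of F on the open interval
  have hgcont : ContinuousOn g (Set.Ioo α β) := by
    have := hconv.continuousOn_interior
    rwa [interior_Icc] at this
  have hFcont : ContinuousOn F (Set.Ioo α β) := by
    apply ContinuousOn.congr (Real.continuous_exp.comp_continuousOn hgcont)
    intro u hu
    exact hFg u (Set.Ioo_subset_Icc_self hu)
  -- bound
  set M : ℝ := Real.exp (max (g α) (g β)) with hM
  have hFb : ∀ u ∈ Set.Icc α β, |F u| ≤ M := by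
    intro u hu
    rw [abs_of_pos (hFpos u hu), hFg u hu]
    exact Real.exp_le_exp.2 (hconv.le_max_of_mem_Icc (Set.left_mem_Icc.2 hαβ.le)
      (Set.right_mem_Icc.2 hαβ.le) hu)
  -- symmetric point
  have hrev : ∀ u ∈ Set.Icc α β, α + β - u ∈ Set.Icc α β := by
    intro u hu
    exact ⟨by linarith [hu.2], by linarith [hu.1]⟩
  -- integrability
  have intF : IntervalIntegrable F volume α β :=
    intInt_of_bdd hαβ.le hFcont (fun u hu => hFb u (Set.Ioc_subset_Icc_self hu))
  have hScont : ContinuousOn (fun u => Real.sqrt (F u * F (α + β - u))) (Set.Ioo α β) := by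
    apply Real.continuous_sqrt.comp_continuousOn
    apply hFcont.mul
    apply hFcont.comp ((continuous_sub_left (α + β)).continuousOn)
    intro u hu
    simp only [Set.mem_Ioo] at hu ⊢
    exact ⟨by linarith [hu.1, hu.2], by linarith [hu.1, hu.2]⟩
  have hSbd : ∀ u ∈ Set.Icc α β, |Real.sqrt (F u * F (α + β - u))| ≤ M := by
    intro u hu
    have h1 := hFb u hu
    have h2 := hFb _ (hrev u hu)
    have hp1 := hFpos u hu
    have hp2 := hFpos _ (hrev u hu)
    rw [abs_of_pos hp1] at h1
    rw [abs_of_pos hp2] at h2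
    rw [abs_of_nonneg (Real.sqrt_nonneg _)]
    calc Real.sqrt (F u * F (α + β - u)) ≤ Real.sqrt (M * M) := by
          apply Real.sqrt_le_sqrt
          exact mul_le_mul h1 h2 hp2.le (le_trans hp1.le h1)
      _ = M := Real.sqrt_mul_self (by positivity)
  have intS : IntervalIntegrable (fun u => Real.sqrt (F u * F (α + β - u))) volume α β :=
    intInt_of_bdd hαβ.le hScont (fun u hu => hSbd u (Set.Ioc_subset_Icc_self hu))

  -- transform the statement integrals to u-space
  have T1 : (∫ t in a..b, f t / t) = ∫ u in α..β, F u := subst_exp f ha0 hab.le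
  have T2 : (∫ t in a..b, (1 / t) * Real.sqrt (f t * f (a * b / t)))
      = ∫ u in α..β, Real.sqrt (F u * F (α + β - u)) := by
    have e1 : ∀ t ∈ Set.uIcc a b, (1/t) * Real.sqrt (f t * f (a*b/t))
        = (fun s => Real.sqrt (f s * f (a*b/s)) / s) t := fun t _ => by
      simp [div_eq_mul_inv, mul_comm]
    rw [intervalIntegral.integral_congr e1,
      subst_exp (fun s => Real.sqrt (f s * f (a*b/s))) ha0 hab.le]
    apply intervalIntegral.integral_congr
    intro u _
    have h2 : a * b / Real.exp u = Real.exp (α + β - u) := by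
      rw [Real.exp_sub, Real.exp_add, Real.exp_log ha0, Real.exp_log hb0]
    simp only [hF, h2]
  have hβα : (0:ℝ) < β - α := sub_pos.2 hαβ
  have hmid : (α + β)/2 ∈ Set.Icc α β := ⟨by linarith, by linarith⟩
  have hsqrtab : Real.sqrt (a * b) = Real.exp ((α + β)/2) := by
    rw [show a * b = Real.exp ((α+β)/2) * Real.exp ((α+β)/2) by
      rw [← Real.exp_add, show (α+β)/2 + (α+β)/2 = α + β by ring, Real.exp_add,
        Real.exp_log ha0, Real.exp_log hb0]]
    exact Real.sqrt_mul_self (Real.exp_pos _).le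
  -- part 1
  have hpt1 : ∀ u ∈ Set.Icc α β, F ((α+β)/2) ≤ Real.sqrt (F u * F (α + β - u)) := by
    intro u hu
    have h := hgm u hu (α + β - u) (hrev u hu) (1/2) ⟨by norm_num, by norm_num⟩
    have harg : (1/2:ℝ) * u + (1 - 1/2) * (α + β - u) = (α+β)/2 := by ring
    rw [harg] at h
    have hx := hFpos u hu
    calc F ((α+β)/2) ≤ F u ^ (1/2:ℝ) * F (α + β - u) ^ (1-1/2:ℝ) := h
      _ = Real.sqrt (F u * F (α + β - u)) := by
        rw [Real.sqrt_mul hx.le, Real.sqrt_eq_rpow, Real.sqrt_eq_rpow]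
        norm_num
  have int1 : F ((α+β)/2) * (β - α) ≤ ∫ u in α..β, Real.sqrt (F u * F (α + β - u)) := by
    have h := intervalIntegral.integral_mono_on hαβ.le
      (_root_.intervalIntegrable_const (c := F ((α+β)/2))) intS hpt1
    rwa [intervalIntegral.integral_const, smul_eq_mul, mul_comm] at h
  have part1 : f (Real.sqrt (a * b)) ≤
      (1 / (β - α)) * ∫ t in a..b, (1 / t) * Real.sqrt (f t * f (a * b / t)) := by
    rw [hsqrtab, T2]
    have hfe : f (Real.exp ((α+β)/2)) = F ((α+β)/2) := rfl
    rw [hfe, one_div_mul_eq_div, le_div_iff₀ hβα]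
    exact int1
  -- part 2
  have hpt2 : ∀ u ∈ Set.Icc α β,
      Real.sqrt (F u * F (α + β - u)) ≤ (fun v => (F v + F (α + β - v))/2) u := by
    intro u hu
    have hx := (hFpos u hu).le
    have hy := (hFpos _ (hrev u hu)).le
    simp only
    nlinarith [sq_nonneg (Real.sqrt (F u) - Real.sqrt (F (α + β - u))),
      Real.sq_sqrt hx, Real.sq_sqrt hy, Real.sqrt_mul hx (F (α + β - u)),
      Real.sqrt_nonneg (F u * F (α + β - u))]
  have intFrev : IntervalIntegrable (fun u => F (α + β - u)) volume α β := by
    apply intInt_of_bdd hαβ.le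
    · apply hFcont.comp ((continuous_sub_left (α + β)).continuousOn)
      intro u hu
      simp only [Set.mem_Ioo] at hu ⊢
      exact ⟨by linarith [hu.1, hu.2], by linarith [hu.1, hu.2]⟩
    · exact fun u hu => hFb _ (hrev u (Set.Ioc_subset_Icc_self hu))
  have hrevint : (∫ u in α..β, F (α + β - u)) = ∫ u in α..β, F u := by
    rw [intervalIntegral.integral_comp_sub_left F (α + β)]
    norm_num
  have int2 : (∫ u in α..β, Real.sqrt (F u * F (α + β - u))) ≤ ∫ u in α..β, F u := by
    have h := intervalIntegral.integral_mono_on hαβ.le intS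
      ((intF.add intFrev).div_const 2) hpt2
    calc (∫ u in α..β, Real.sqrt (F u * F (α + β - u)))
        ≤ ∫ u in α..β, (F u + F (α + β - u))/2 := h
      _ = ((∫ u in α..β, F u) + ∫ u in α..β, F (α + β - u))/2 := by
          rw [intervalIntegral.integral_div, intervalIntegral.integral_add intF intFrev]
      _ = ∫ u in α..β, F u := by rw [hrevint]; ring
  have part2 : (1 / (β - α)) *
        (∫ t in a..b, (1 / t) * Real.sqrt (f t * f (a * b / t))) ≤
      (1 / (β - α)) * ∫ t in a..b, f t / t := by
    rw [T1, T2]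
    exact mul_le_mul_of_nonneg_left int2 (by positivity)
  -- parts 3 & 4 setup
  have hA : F α = f a := by simp only [hF]; rw [Real.exp_log ha0]
  have hB : F β = f b := by simp only [hF]; rw [Real.exp_log hb0]
  have hA0 : 0 < f a := hfpos a ha
  have hB0 : 0 < f b := hfpos b hb
  have hlogne : Real.log (f b) - Real.log (f a) ≠ 0 := by
    refine sub_ne_zero.2 fun h => hfab ?_
    rw [← Real.exp_log hA0, ← Real.exp_log hB0, h]
  set m : ℝ := (Real.log (f b) - Real.log (f a))/(β - α) with hm
  have hm0 : m ≠ 0 := div_ne_zero hlogne hβα.ne'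
  have hmba : m * (β - α) = Real.log (f b) - Real.log (f a) := by
    rw [hm]; field_simp
  -- chord bound utilities
  have hchord : ∀ u ∈ Set.Icc α β,
      Real.log (f a) + m * (u - α)
      = ((β - u)/(β - α)) * Real.log (f a) + ((u - α)/(β - α)) * Real.log (f b) := by
    intro u _
    rw [hm]; field_simp; ring
  have hweights : ∀ u ∈ Set.Icc α β, (0:ℝ) ≤ (β - u)/(β - α) ∧ (0:ℝ) ≤ (u - α)/(β - α)
      ∧ (β - u)/(β - α) + (u - α)/(β - α) = 1 := by
    intro u hu
    refine ⟨div_nonneg (by linarith [hu.2]) hβα.le, div_nonneg (by linarith [hu.1]) hβα.le, ?_⟩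
    field_simp
    ring
  -- pointwise chord bound for part 3
  have hgα : g α = Real.log (f a) := by simp only [hg]; rw [hA]
  have hgβ : g β = Real.log (f b) := by simp only [hg]; rw [hB]
  have hpt3 : ∀ u ∈ Set.Icc α β, F u ≤ Real.exp (Real.log (f a) + m * (u - α)) := by
    intro u hu
    obtain ⟨hw1, hw2, hw3⟩ := hweights u hu
    have hcomb : ((β - u)/(β - α)) • α + ((u - α)/(β - α)) • β = u := by
      simp only [smul_eq_mul]; field_simp; ring
    have h := hconv.2 (Set.left_mem_Icc.2 hαβ.le) (Set.right_mem_Icc.2 hαβ.le) hw1 hw2 hw3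
    rw [hcomb] at h
    rw [hFg u hu]
    apply Real.exp_le_exp.2
    rw [hchord u hu]
    simpa only [smul_eq_mul, hgα, hgβ] using h
  have intL : IntervalIntegrable (fun u => Real.exp (Real.log (f a) + m * (u - α)))
      volume α β := by
    apply Continuous.intervalIntegrable
    exact Real.continuous_exp.comp (continuous_const.add
      (continuous_const.mul (continuous_id.sub continuous_const)))
  have hIL : (∫ u in α..β, Real.exp (Real.log (f a) + m * (u - α)))
      = (f b - f a)/m := by
    have he : (fun u => Real.exp (Real.log (f a) + m * (u - α)))
        = fun u => Real.exp (m * u + (Real.log (f a) - m * α)) := by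
      funext u; ring_nf
    rw [he, intervalIntegral.integral_comp_mul_add Real.exp hm0
      (Real.log (f a) - m * α), integral_exp]
    have e1 : m * β + (Real.log (f a) - m * α) = Real.log (f b) := by
      have : m * β + (Real.log (f a) - m * α) = Real.log (f a) + m * (β - α) := by ring
      rw [this, hmba]; ring
    have e2 : m * α + (Real.log (f a) - m * α) = Real.log (f a) := by ring
    rw [e1, e2, Real.exp_log hA0, Real.exp_log hB0, smul_eq_mul]
    rw [div_eq_mul_inv, mul_comm]
  have int3 : (∫ u in α..β, F u) ≤ (f b - f a)/m := by
    rw [← hIL]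
    exact intervalIntegral.integral_mono_on hαβ.le intF intL hpt3
  have hkey : (1 / (β - α)) * ((f b - f a)/m)
      = (f b - f a)/(Real.log (f b) - Real.log (f a)) := by
    rw [hm]; field_simp
  have part3 : (1 / (β - α)) * (∫ t in a..b, f t / t) ≤
      (f b - f a) / (Real.log (f b) - Real.log (f a)) := by
    rw [T1, ← hkey]
    exact mul_le_mul_of_nonneg_left int3 (by positivity)
  -- part 4
  have hpt4 : ∀ u ∈ Set.Icc α β, Real.exp (Real.log (f a) + m * (u - α)) ≤
      (fun v => ((β - v)/(β - α)) * f a + ((v - α)/(β - α)) * f b) u := by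
    intro u hu
    obtain ⟨hw1, hw2, hw3⟩ := hweights u hu
    simp only
    have he : Real.exp (Real.log (f a) + m * (u - α))
        = f a ^ ((β - u)/(β - α)) * f b ^ ((u - α)/(β - α)) := by
      rw [hchord u hu, mul_comm ((β - u)/(β - α)) _, mul_comm ((u - α)/(β - α)) _,
        Real.exp_add, Real.exp_mul, Real.exp_mul, Real.exp_log hA0, Real.exp_log hB0]
    rw [he]
    exact Real.geom_mean_le_arith_mean2_weighted hw1 hw2 hA0.le hB0.le hw3
  have intAff : IntervalIntegrable
      (fun v => ((β - v)/(β - α)) * f a + ((v - α)/(β - α)) * f b) volume α β := by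
    apply Continuous.intervalIntegrable
    fun_prop
  have hIA : (∫ u in α..β, (((β - u)/(β - α)) * f a + ((u - α)/(β - α)) * f b))
      = (f a + f b) * (β - α) / 2 := by
    have he : (fun u => ((β - u)/(β - α)) * f a + ((u - α)/(β - α)) * f b)
        = fun u => ((β * f a - α * f b)/(β - α)) + ((f b - f a)/(β - α)) * u := by
      funext u; field_simp; ring
    rw [he, intervalIntegral.integral_add (_root_.intervalIntegrable_const)
      (((by fun_prop : Continuous fun u : ℝ => (f b - f a)/(β - α) * u).intervalIntegrable _ _)),
      intervalIntegral.integral_const, intervalIntegral.integral_const_mul,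
      integral_id, smul_eq_mul]
    field_simp
    ring
  have int4 : (f b - f a)/m ≤ (f a + f b) * (β - α) / 2 := by
    rw [← hIL, ← hIA]
    exact intervalIntegral.integral_mono_on hαβ.le intL intAff hpt4
  have part4 : (f b - f a) / (Real.log (f b) - Real.log (f a)) ≤ (f a + f b) / 2 := by
    rw [← hkey]
    have h := mul_le_mul_of_nonneg_left int4 (le_of_lt (by positivity :
      (0:ℝ) < 1 / (β - α)))
    calc (1 / (β - α)) * ((f b - f a)/m) ≤ (1 / (β - α)) * ((f a + f b) * (β - α) / 2) := h
      _ = (f a + f b) / 2 := by field_simp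
  exact ⟨part1, part2, part3, part4⟩
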